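/- The reflected planar random walk started away from the corners does not reach the extremities of the diagonal before the boundary: for every δ > 0 and every ε > 0, limsup_{N→∞} sup { h_N(𝐤) : 𝐤 ∈ B_N, ‖𝐤‖ > δN, ‖(N,N)−𝐤‖ > δN } = 0. -/

import Mathlib

open Set

namespace BoundaryDriven

/-- The discrete Laplacian on `ℤ²`. -/
def lap2 (f : ℤ × ℤ → ℝ) (x : ℤ × ℤ) : ℝ :=
  f (x.1 + 1, x.2) + f (x.1 - 1, x.2) + f (x.1, x.2 + 1) + f (x.1, x.2 - 1) - 4 * f x

/-- The diagonal "gradient" `(∇₂f)(k,l) = f(k−1,l) + f(k,l+1) − 2f(k,l)`. -/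
def ref2 (f : ℤ × ℤ → ℝ) (x : ℤ × ℤ) : ℝ :=
  f (x.1 - 1, x.2) + f (x.1, x.2 + 1) - 2 * f x

/-- `n̂ = ⌊N^{3/4}⌋`. -/
noncomputable def nhat (N : ℕ) : ℤ := ⌊(N : ℝ) ^ ((3 : ℝ) / 4)⌋

/-- The bulk set `B_N = {(k,l) : p+1 < k < max(n̂, l−1), n̂ < l < N}`. -/
def memB (p N : ℕ) (x : ℤ × ℤ) : Prop :=
  (p : ℤ) + 1 < x.1 ∧ x.1 < max (nhat N) (x.2 - 1) ∧ nhat N < x.2 ∧ x.2 < (N : ℤ)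

/-- The diagonal boundary `D_N = {(k,k+1) : n̂ ≤ k ≤ N−2}`. -/
def memD (N : ℕ) (x : ℤ × ℤ) : Prop :=
  x.2 = x.1 + 1 ∧ nhat N ≤ x.1 ∧ x.1 ≤ (N : ℤ) - 2

/-- The vertical boundary `V_N = {(p+1,l) : n̂ < l < N}`. -/
def memV (p N : ℕ) (x : ℤ × ℤ) : Prop :=
  x.1 = (p : ℤ) + 1 ∧ nhat N < x.2 ∧ x.2 < (N : ℤ)

/-- The lower horizontal boundary `H_{l,N} = {(k,n̂) : p+1 ≤ k < n̂}`. -/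
def memHl (p N : ℕ) (x : ℤ × ℤ) : Prop :=
  x.2 = nhat N ∧ (p : ℤ) + 1 ≤ x.1 ∧ x.1 < nhat N

/-- The upper horizontal boundary `H_{u,N} = {(k,N) : p+1 ≤ k ≤ N−2}`. -/
def memHu (p N : ℕ) (x : ℤ × ℤ) : Prop :=
  x.2 = (N : ℤ) ∧ (p : ℤ) + 1 ≤ x.1 ∧ x.1 ≤ (N : ℤ) - 2

/-- The boundary `∂B_N = V_N ∪ H_{l,N} ∪ H_{u,N}`. -/
def memBd (p N : ℕ) (x : ℤ × ℤ) : Prop := memV p N x ∨ memHl p N x ∨ memHu p N x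

/-- The extremities `D̃_{N,ε}` of the diagonal:
`{(k,k+1) ∈ D_N : k ≤ N^{1−ε/4} or k ≥ N − N^{1−ε/4}}`. -/
def memDtil (N : ℕ) (ε : ℝ) (x : ℤ × ℤ) : Prop :=
  memD N x ∧ ((x.1 : ℝ) ≤ (N : ℝ) ^ (1 - ε / 4) ∨ (N : ℝ) - (N : ℝ) ^ (1 - ε / 4) ≤ (x.1 : ℝ))

/-! ### Auxiliary machinery: an explicit discrete superharmonic barrier -/

noncomputable def phiv (v : ℝ) : ℝ := -Real.log v / 2 - 1/v

lemma keycalc (u q1 q2 q3 q4 T : ℝ) (hu : 2 ≤ u)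
    (hq1 : 0 < q1) (hq2 : 0 < q2) (hq3 : 0 < q3) (hq4 : 0 < q4)
    (hsum12 : q1 + q2 = 2*(u+1)) (hsum34 : q3 + q4 = 2*(u+1))
    (hps : q1*q2 + q3*q4 = 2*(u^2+1))
    (hT0 : 0 ≤ T) (hT4 : T ≤ 4*u^2)
    (hprod : q1*q2*(q3*q4) = (u^2-1)^2 + T) :
    phiv q1 + phiv q2 + phiv q3 + phiv q4 - 4 * phiv u < 0 := by
  have hu0 : (0:ℝ) < u := by linarith
  have hPpos : 0 < q1*q2*(q3*q4) := by positivity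
  have hlog : Real.log (q1*q2*(q3*q4)) = Real.log q1 + Real.log q2 + Real.log q3 + Real.log q4 := by
    rw [Real.log_mul (by positivity) (by positivity), Real.log_mul hq1.ne' hq2.ne',
      Real.log_mul hq3.ne' hq4.ne']
    ring
  have i12 : 1/q1 + 1/q2 = 2*(u+1)/(q1*q2) := by
    rw [div_add_div _ _ hq1.ne' hq2.ne']; congr 1; linarith
  have i34 : 1/q3 + 1/q4 = 2*(u+1)/(q3*q4) := by
    rw [div_add_div _ _ hq3.ne' hq4.ne']; congr 1; linarith
  have hinv : 1/q1 + 1/q2 + 1/q3 + 1/q4 = 4*(u+1)*(u^2+1)/(q1*q2*(q3*q4)) := by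
    rw [add_assoc, i12, i34, div_add_div _ _ (by positivity) (by positivity)]
    rw [show 2*(u+1)*(q3*q4) + (q1*q2)*(2*(u+1)) = 2*(u+1)*(q1*q2+q3*q4) by ring, hps]
    congr 1; ring
  have hloglb : 1 - u^4/(q1*q2*(q3*q4)) ≤ Real.log (q1*q2*(q3*q4)) - Real.log (u^4) := by
    have h1 : Real.log (u^4/(q1*q2*(q3*q4))) ≤ u^4/(q1*q2*(q3*q4)) - 1 :=
      Real.log_le_sub_one_of_pos (div_pos (by positivity) hPpos)
    rw [Real.log_div (by positivity) hPpos.ne'] at h1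
    linarith
  have hexp : phiv q1 + phiv q2 + phiv q3 + phiv q4 - 4*phiv u
      = -((Real.log (q1*q2*(q3*q4)) - Real.log (u^4))/2)
        - (4*(u+1)*(u^2+1)/(q1*q2*(q3*q4)) - 4/u) := by
    unfold phiv
    rw [hlog, ← hinv, show Real.log (u^4) = 4 * Real.log u by
      rw [Real.log_pow]; push_cast; ring]
    ring
  rw [hexp]
  have hpoly : u*(u^4 - q1*q2*(q3*q4)) + 8*(q1*q2*(q3*q4)) - 8*u*(u+1)*(u^2+1) < 0 := by
    rw [hprod]
    nlinarith [mul_nonneg hT0 hu0.le, mul_pos hu0 hu0, mul_pos (mul_pos hu0 hu0) hu0,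
      mul_nonneg (mul_nonneg hu0.le hu0.le) (sub_nonneg.2 hu)]
  have heq : -((1 - u^4/(q1*q2*(q3*q4)))/2) - (4*(u+1)*(u^2+1)/(q1*q2*(q3*q4)) - 4/u)
      = (u*(u^4 - q1*q2*(q3*q4)) + 8*(q1*q2*(q3*q4)) - 8*u*(u+1)*(u^2+1))/(2*u*(q1*q2*(q3*q4))) := by
    field_simp
    ring
  have hfin : -((1 - u^4/(q1*q2*(q3*q4)))/2) - (4*(u+1)*(u^2+1)/(q1*q2*(q3*q4)) - 4/u) < 0 := by
    rw [heq]
    exact div_neg_of_neg_of_pos hpoly (by positivity)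
  linarith

lemma keylem (X Y : ℝ) (h2 : 2 ≤ X^2 + Y^2) :
    phiv ((X+1)^2+Y^2) + phiv ((X-1)^2+Y^2) + phiv (X^2+(Y+1)^2) + phiv (X^2+(Y-1)^2)
      - 4 * phiv (X^2+Y^2) < 0 := by
  have h12pos : 0 < ((X+1)^2+Y^2) * ((X-1)^2+Y^2) := by
    nlinarith [sq_nonneg Y, sq_nonneg (X^2+Y^2-1)]
  have h34pos : 0 < (X^2+(Y+1)^2) * (X^2+(Y-1)^2) := by
    nlinarith [sq_nonneg X, sq_nonneg (X^2+Y^2-1)]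
  have hq1 : 0 < (X+1)^2+Y^2 := by nlinarith [sq_nonneg ((X-1)^2+Y^2), h12pos]
  have hq2 : 0 < (X-1)^2+Y^2 := by nlinarith [sq_nonneg ((X+1)^2+Y^2), h12pos]
  have hq3 : 0 < X^2+(Y+1)^2 := by nlinarith [sq_nonneg (X^2+(Y-1)^2), h34pos]
  have hq4 : 0 < X^2+(Y-1)^2 := by nlinarith [sq_nonneg (X^2+(Y+1)^2), h34pos]
  exact keycalc (X^2+Y^2) _ _ _ _ (16*X^2*Y^2) h2 hq1 hq2 hq3 hq4
    (by ring) (by ring) (by ring) (by positivity) (by nlinarith [sq_nonneg (X^2-Y^2)]) (by ring)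

lemma phiv_diff_le {v w : ℝ} (h0 : 0 < v) (hvw : v ≤ w) : phiv v - phiv w ≤ Real.log (w/v) / 2 := by
  have hw0 : 0 < w := lt_of_lt_of_le h0 hvw
  unfold phiv
  rw [Real.log_div hw0.ne' h0.ne']
  have : 1/w ≤ 1/v := one_div_le_one_div_of_le h0 hvw
  linarith

lemma phiv_gap {v w : ℝ} (h4 : 4 ≤ v) (hvw : v ≤ w) : Real.log (w/v)/4 ≤ phiv v - phiv w := by
  have hv0 : (0:ℝ) < v := by linarith
  have hw0 : (0:ℝ) < w := by linarith
  have hlb : 1 - v/w ≤ Real.log (w/v) := by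
    have h1 : Real.log (v/w) ≤ v/w - 1 := Real.log_le_sub_one_of_pos (by positivity)
    have h2 : Real.log (v/w) = -Real.log (w/v) := by
      rw [Real.log_div hv0.ne' hw0.ne', Real.log_div hw0.ne' hv0.ne']; ring
    rw [h2] at h1; linarith
  have e1 : 1/v - 1/w = (w - v)/(v*w) := by field_simp
  have e2 : (w - v)/(v*w) ≤ (w - v)/(4*w) := by
    apply div_le_div_of_nonneg_left (by linarith) (by positivity)
    nlinarith
  have e3 : (w - v)/(4*w) = (1 - v/w)/4 := by
    rw [eq_div_iff (by norm_num : (4:ℝ) ≠ 0)]; field_simp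
  have e4 : 1/v - 1/w ≤ Real.log (w/v)/4 := by
    rw [e1]
    calc (w-v)/(v*w) ≤ (w-v)/(4*w) := e2
      _ = (1 - v/w)/4 := e3
      _ ≤ Real.log (w/v)/4 := by linarith
  unfold phiv
  rw [Real.log_div hw0.ne' hv0.ne'] at *
  linarith

lemma phiv_anti {v w : ℝ} (h1 : 1 ≤ v) (hvw : v ≤ w) (h8 : 8 ≤ w) : phiv w ≤ phiv v := by
  have hv0 : (0:ℝ) < v := by linarith
  have hw0 : (0:ℝ) < w := by linarith
  by_cases h : 4 ≤ v
  · have := phiv_gap h hvw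
    have hlog : 0 ≤ Real.log (w/v) := Real.log_nonneg (by rw [le_div_iff₀ hv0]; linarith)
    linarith
  · push_neg at h
    have hub : phiv w ≤ -1 := by
      have hlw : Real.log 8 ≤ Real.log w := Real.log_le_log (by norm_num) h8
      have h8e : Real.log 8 = 3 * Real.log 2 := by
        rw [show (8:ℝ) = 2^3 by norm_num, Real.log_pow]; push_cast; ring
      have h2 : (0.6931471803 : ℝ) < Real.log 2 := Real.log_two_gt_d9
      have : (2:ℝ) < Real.log w := by rw [h8e] at hlw; linarith
      have hiw : 0 < 1/w := by positivity
      unfold phiv; linarith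
    have hlbv : -1 ≤ phiv v := by
      by_cases h2v : v ≤ 2
      · have hl : Real.log v ≤ v - 1 := Real.log_le_sub_one_of_pos hv0
        have h5 : 1/v ≤ (3 - v)/2 := by
          rw [div_le_div_iff₀ hv0 two_pos]; nlinarith
        unfold phiv; linarith
      · push_neg at h2v
        have hl : Real.log v ≤ Real.log 4 + (v - 4)/4 := by
          have := Real.log_le_sub_one_of_pos (x := v/4) (by positivity)
          rw [Real.log_div hv0.ne' (by norm_num)] at this
          linarith
        have h4e : Real.log 4 = 2 * Real.log 2 := by
          rw [show (4:ℝ) = 2^2 by norm_num, Real.log_pow]; push_cast; ring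
        have h2 : Real.log 2 < 0.6931471808 := Real.log_two_lt_d9
        have h6 : v/8 + 1/v ≤ 3/4 := by
          have hd : (v-2)*(v-4) ≤ 0 := by nlinarith
          rw [div_add_div _ _ (by norm_num) hv0.ne', div_le_div_iff₀ (by positivity) (by norm_num)]
          nlinarith
        unfold phiv; rw [h4e] at hl; linarith
    linarith

def qc (c z : ℤ × ℤ) : ℝ := ((z.1 - c.1 : ℤ) : ℝ)^2 + ((z.2 - c.2 : ℤ) : ℝ)^2

noncomputable def bar (c z : ℤ × ℤ) : ℝ := phiv (qc c z)

lemma one_le_qc {c z : ℤ × ℤ} (h : z ≠ c) : 1 ≤ qc c z := by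
  unfold qc
  have h1 : (1:ℤ) ≤ (z.1 - c.1)^2 + (z.2 - c.2)^2 := by
    rcases eq_or_ne z.1 c.1 with h1 | h1
    · have h2 : z.2 ≠ c.2 := fun h2 => h (Prod.ext h1 h2)
      nlinarith [sq_nonneg (z.1 - c.1), sq_pos_of_ne_zero (sub_ne_zero.2 h2)]
    · nlinarith [sq_nonneg (z.2 - c.2), sq_pos_of_ne_zero (sub_ne_zero.2 h1)]
  calc (1:ℝ) = ((1:ℤ):ℝ) := by norm_num
    _ ≤ (((z.1 - c.1)^2 + (z.2 - c.2)^2 : ℤ) : ℝ) := by exact_mod_cast h1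
    _ = ((z.1 - c.1 : ℤ) : ℝ)^2 + ((z.2 - c.2 : ℤ) : ℝ)^2 := by push_cast; ring

lemma superh {c z : ℤ × ℤ} (h2 : 2 ≤ qc c z) : lap2 (bar c) z < 0 := by
  have e1 : qc c (z.1 + 1, z.2) = (((z.1 - c.1 : ℤ):ℝ)+1)^2 + ((z.2 - c.2 : ℤ):ℝ)^2 := by
    unfold qc; push_cast; ring
  have e2 : qc c (z.1 - 1, z.2) = (((z.1 - c.1 : ℤ):ℝ)-1)^2 + ((z.2 - c.2 : ℤ):ℝ)^2 := by
    unfold qc; push_cast; ring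
  have e3 : qc c (z.1, z.2 + 1) = ((z.1 - c.1 : ℤ):ℝ)^2 + (((z.2 - c.2 : ℤ):ℝ)+1)^2 := by
    unfold qc; push_cast; ring
  have e4 : qc c (z.1, z.2 - 1) = ((z.1 - c.1 : ℤ):ℝ)^2 + (((z.2 - c.2 : ℤ):ℝ)-1)^2 := by
    unfold qc; push_cast; ring
  unfold lap2 bar
  rw [e1, e2, e3, e4]
  exact keylem _ _ h2

lemma refl_superh {c z : ℤ × ℤ} (hc : c.2 = c.1 + 1) (hz : z.2 = z.1 + 1)
    (h2 : 2 ≤ qc c z) : ref2 (bar c) z < 0 := by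
  have key : ref2 (bar c) z = lap2 (bar c) z / 2 := by
    have e1 : qc c (z.1 + 1, z.2) = qc c (z.1, z.2 + 1) := by
      unfold qc; rw [hc, hz]; push_cast; ring
    have e2 : qc c (z.1, z.2 - 1) = qc c (z.1 - 1, z.2) := by
      unfold qc; rw [hc, hz]; push_cast; ring
    unfold ref2 lap2 bar
    rw [e1, e2]
    ring
  rw [key]
  have := superh h2
  linarith

lemma lap2_comb (a L : ℝ) (f g : ℤ × ℤ → ℝ) (z : ℤ × ℤ) :
    lap2 (fun w => a * (f w - L) + a * (g w - L)) z = a * lap2 f z + a * lap2 g z := by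
  unfold lap2; ring

lemma ref2_comb (a L : ℝ) (f g : ℤ × ℤ → ℝ) (z : ℤ × ℤ) :
    ref2 (fun w => a * (f w - L) + a * (g w - L)) z = a * ref2 f z + a * ref2 g z := by
  unfold ref2; ring

lemma qc_lb1 {c z : ℤ × ℤ} {r : ℝ} (hr : 0 ≤ r)
    (h : r ≤ ((z.1 - c.1 : ℤ):ℝ) ∨ r ≤ ((c.1 - z.1 : ℤ):ℝ)) : r^2 ≤ qc c z := by
  unfold qc
  push_cast at h ⊢
  rcases h with h | h <;> nlinarith [sq_nonneg ((z.2:ℝ) - (c.2:ℝ))]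

lemma qc_lb2 {c z : ℤ × ℤ} {r : ℝ} (hr : 0 ≤ r)
    (h : r ≤ ((z.2 - c.2 : ℤ):ℝ) ∨ r ≤ ((c.2 - z.2 : ℤ):ℝ)) : r^2 ≤ qc c z := by
  unfold qc
  push_cast at h ⊢
  rcases h with h | h <;> nlinarith [sq_nonneg ((z.1:ℝ) - (c.1:ℝ))]

lemma qc_lb_both {c z : ℤ × ℤ} (h1 : z.1 + 1 ≤ c.1) (h2 : z.2 + 1 ≤ c.2) : 2 ≤ qc c z := by
  unfold qc
  have k1 : (1:ℝ) ≤ ((c.1:ℝ) - (z.1:ℝ)) := by exact_mod_cast (by omega : (1:ℤ) ≤ c.1 - z.1)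
  have k2 : (1:ℝ) ≤ ((c.2:ℝ) - (z.2:ℝ)) := by exact_mod_cast (by omega : (1:ℤ) ≤ c.2 - z.2)
  push_cast
  nlinarith

lemma qc_le {c z : ℤ × ℤ} {N : ℕ} (h1 : 0 ≤ z.1) (h2 : z.1 ≤ (N:ℤ)) (h3 : 0 ≤ z.2)
    (h4 : z.2 ≤ (N:ℤ)) (h5 : 0 ≤ c.1) (h6 : c.1 ≤ (N:ℤ)) (h7 : 0 ≤ c.2) (h8 : c.2 ≤ (N:ℤ)) :
    qc c z ≤ 2*(N:ℝ)^2 := by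
  have k1 : (z.1 - c.1)^2 ≤ ((N:ℤ))^2 := by nlinarith
  have k2 : (z.2 - c.2)^2 ≤ ((N:ℤ))^2 := by nlinarith
  have k : ((z.1 - c.1)^2 + (z.2 - c.2)^2 : ℤ) ≤ 2*((N:ℤ))^2 := by linarith
  unfold qc
  push_cast
  exact_mod_cast k

/-! ### Membership bookkeeping -/

def Om (p N : ℕ) (x : ℤ × ℤ) : Prop := memB p N x ∨ memD N x ∨ memBd p N x

lemma memB_iff (p N : ℕ) (z : ℤ × ℤ) :
    memB p N z ↔ ((p:ℤ)+1 < z.1 ∧ z.1 + 1 < z.2 ∧ nhat N < z.2 ∧ z.2 < (N:ℤ)) := by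
  unfold memB
  constructor
  · rintro ⟨h1, h2, h3, h4⟩
    rw [lt_max_iff] at h2
    exact ⟨h1, by omega, h3, h4⟩
  · rintro ⟨h1, h2, h3, h4⟩
    exact ⟨h1, by rw [lt_max_iff]; omega, h3, h4⟩

lemma Om_iff (p N : ℕ) (z : ℤ × ℤ) :
    Om p N z ↔ (((p:ℤ)+1 < z.1 ∧ z.1 + 1 < z.2 ∧ nhat N < z.2 ∧ z.2 < (N:ℤ))
      ∨ (z.2 = z.1 + 1 ∧ nhat N ≤ z.1 ∧ z.1 ≤ (N:ℤ) - 2)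
      ∨ (z.1 = (p:ℤ)+1 ∧ nhat N < z.2 ∧ z.2 < (N:ℤ))
      ∨ (z.2 = nhat N ∧ (p:ℤ)+1 ≤ z.1 ∧ z.1 < nhat N)
      ∨ (z.2 = (N:ℤ) ∧ (p:ℤ)+1 ≤ z.1 ∧ z.1 ≤ (N:ℤ) - 2)) := by
  unfold Om memBd memD memV memHl memHu
  rw [memB_iff]

lemma nbrB {p N : ℕ} {z : ℤ × ℤ} (hnN : nhat N ≤ (N:ℤ) - 2) (hz : memB p N z) :
    Om p N (z.1+1, z.2) ∧ Om p N (z.1-1, z.2) ∧ Om p N (z.1, z.2+1) ∧ Om p N (z.1, z.2-1) := by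
  rw [memB_iff] at hz
  refine ⟨?_, ?_, ?_, ?_⟩ <;> · rw [Om_iff]; simp only []; omega

lemma nbrD {p N : ℕ} {z : ℤ × ℤ} (hnN : nhat N ≤ (N:ℤ) - 2) (hn4 : (p:ℤ) + 4 ≤ nhat N)
    (hz : memD N z) :
    Om p N (z.1-1, z.2) ∧ Om p N (z.1, z.2+1) := by
  obtain ⟨h1, h2, h3⟩ := hz
  constructor <;> · rw [Om_iff]; simp only []; omega

lemma Om_box {p N : ℕ} {z : ℤ × ℤ} (hnN : nhat N ≤ (N:ℤ) - 2) (hn4 : (p:ℤ) + 4 ≤ nhat N)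
    (hz : Om p N z) : 0 ≤ z.1 ∧ z.1 ≤ (N:ℤ) - 1 ∧ nhat N ≤ z.2 ∧ z.2 ≤ (N:ℤ) := by
  rw [Om_iff] at hz
  omega

/-! ### The main theorem -/


/-! ### Small arithmetic helpers (kept separate to keep linear-arithmetic contexts small) -/

lemma aux_sq_mono {a b : ℝ} (h0 : 0 ≤ a) (h : a ≤ b) : a^2 ≤ b^2 := by nlinarith

lemma aux_one_le_sq {t : ℝ} (h : 1 ≤ t) : 1 ≤ t^2 := by nlinarith

lemma aux_um8 {n : ℝ} (h : 4 ≤ n) : (8:ℝ) ≤ 9*n^2 := by nlinarith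

lemma aux_msq8 {q : ℝ} (h : 1 ≤ q) : (8:ℝ) ≤ 2*(q+2)^2 := by nlinarith

lemma aux_mu2 {q r n : ℝ} (h1 : 1 ≤ q) (h2 : 4 ≤ r) (h3 : q^2*r = n^2) :
    2*(2*(q+2)^2) ≤ 9*n^2 := by
  nlinarith [mul_nonneg (sub_nonneg.2 h2) (sq_nonneg q),
    mul_nonneg (sub_nonneg.2 h1) (show (0:ℝ) ≤ 2*q+1 by linarith)]

lemma aux_mu3 {q r n : ℝ} (h1 : 1 ≤ q) (h2 : 4 ≤ r) (h3 : q^2*r = n^2) :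
    r * (2*(q+2)^2) ≤ 9*n^2*2 := by
  nlinarith [mul_nonneg (mul_nonneg (sub_nonneg.2 h1)
    (show (0:ℝ) ≤ 2*q+1 by linarith)) (show (0:ℝ) ≤ r by linarith)]

lemma aux_two2 {n : ℝ} : 2*n^2 ≤ 9*n^2 := by nlinarith [sq_nonneg n]

lemma aux_delta_lt_one {d n : ℝ} (hn : 0 < n) (h : d*n < n) : d < 1 := by
  nlinarith

lemma aux_log36 {d : ℝ} (h0 : 0 < d) (h1 : d < 1) : (1:ℝ) < 36/d^2 := by
  rw [lt_div_iff₀ (by positivity)]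
  nlinarith

set_option maxHeartbeats 1000000 in
theorem reflected_walk_avoids_diagonal_extremities
    (p : ℕ) (hp : 1 ≤ p) (ε : ℝ) (hε : 0 < ε)
    (H : ℕ → (ℤ × ℤ) → ℝ)
    (hH : ∀ N : ℕ, p + 2 < N →
      (∀ x : ℤ × ℤ, H N x ∈ Set.Icc (0 : ℝ) 1) ∧
      (∀ x : ℤ × ℤ, memDtil N ε x → H N x = 1) ∧
      (∀ x : ℤ × ℤ, memBd p N x → H N x = 0) ∧
      (∀ x : ℤ × ℤ, memB p N x → lap2 (H N) x = 0) ∧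
      (∀ x : ℤ × ℤ, memD N x → ¬ memDtil N ε x → ref2 (H N) x = 0)) :
    ∀ δ > (0 : ℝ), ∀ ε' > (0 : ℝ), ∃ N₀ : ℕ, ∀ N ≥ N₀, ∀ x : ℤ × ℤ,
      memB p N x →
      δ * N < max |(x.1 : ℝ)| |(x.2 : ℝ)| →
      δ * N < max |(N : ℝ) - (x.1 : ℝ)| |(N : ℝ) - (x.2 : ℝ)| →
        H N x ≤ ε' := by
  classical
  intro δ hδ ε' hε'
  set b : ℝ := min ε 2 with hbdef
  have hb0 : 0 < b := lt_min hε two_pos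
  have hb2 : b ≤ 2 := min_le_right _ _
  have hbε : b ≤ ε := min_le_left _ _
  have htend14 : Filter.Tendsto (fun n : ℕ => (n:ℝ) ^ ((1:ℝ)/4)) Filter.atTop Filter.atTop :=
    (tendsto_rpow_atTop (by norm_num)).comp tendsto_natCast_atTop_atTop
  have htend34 : Filter.Tendsto (fun n : ℕ => (n:ℝ) ^ ((3:ℝ)/4)) Filter.atTop Filter.atTop :=
    (tendsto_rpow_atTop (by norm_num)).comp tendsto_natCast_atTop_atTop
  have htendb : Filter.Tendsto (fun n : ℕ => (n:ℝ) ^ (b/2)) Filter.atTop Filter.atTop :=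
    (tendsto_rpow_atTop (by positivity)).comp tendsto_natCast_atTop_atTop
  have htendN : Filter.Tendsto (fun n : ℕ => (n:ℝ)) Filter.atTop Filter.atTop :=
    tendsto_natCast_atTop_atTop
  have htendδ : Filter.Tendsto (fun n : ℕ => δ * (n:ℝ)) Filter.atTop Filter.atTop :=
    htendN.const_mul_atTop hδ
  have htendlog : Filter.Tendsto (fun n : ℕ => (b/2) * Real.log (n:ℝ)) Filter.atTop Filter.atTop :=
    (Real.tendsto_log_atTop.comp tendsto_natCast_atTop_atTop).const_mul_atTop (by positivity)
  have hev : ∀ᶠ N : ℕ in Filter.atTop,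
      (p + 2 < N ∧ ((p:ℝ)+4 ≤ (N:ℝ)^((3:ℝ)/4)) ∧ ((4:ℝ) ≤ (N:ℝ)^((1:ℝ)/4))
        ∧ (4/δ ≤ (N:ℝ)^((1:ℝ)/4)) ∧ ((4:ℝ) ≤ (N:ℝ)) ∧ ((2:ℝ) ≤ δ*(N:ℝ))
        ∧ ((4:ℝ) ≤ (N:ℝ)^(b/2))
        ∧ (Real.log 2 + 1 + (4/ε') * Real.log (36/δ^2) ≤ (b/2) * Real.log (N:ℝ))) := by
    refine (Filter.eventually_gt_atTop (p+2)).and ((htend34.eventually_ge_atTop _).and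
      ((htend14.eventually_ge_atTop _).and ((htend14.eventually_ge_atTop _).and
      ((htendN.eventually_ge_atTop _).and ((htendδ.eventually_ge_atTop _).and
      ((htendb.eventually_ge_atTop _).and (htendlog.eventually_ge_atTop _)))))))
  obtain ⟨N₀, hN₀⟩ := Filter.eventually_atTop.mp hev
  refine ⟨N₀, fun N hN x hxB hx1 hx2 => ?_⟩
  obtain ⟨hc1, hc34, hc14, hc14δ, h4N, hc5, hc7, hc8⟩ := hN₀ N hN
  obtain ⟨hH0, hH1, hHbd, hHlap, hHref⟩ := hH N hc1
  have hN0R : (0:ℝ) < (N:ℝ) := by linarith only [h4N]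
  have hc6 : (1:ℝ) ≤ (N:ℝ) := by linarith only [h4N]
  -- nhat facts
  have hnhle34 : ((nhat N : ℤ):ℝ) ≤ (N:ℝ)^((3:ℝ)/4) := Int.floor_le _
  have h34mul : (N:ℝ)^((3:ℝ)/4) * (N:ℝ)^((1:ℝ)/4) = (N:ℝ) := by
    rw [← Real.rpow_add hN0R]
    norm_num
  have h34nonneg : (0:ℝ) ≤ (N:ℝ)^((3:ℝ)/4) := Real.rpow_nonneg hN0R.le _
  have h34leN4 : (N:ℝ)^((3:ℝ)/4) * 4 ≤ (N:ℝ) := by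
    calc (N:ℝ)^((3:ℝ)/4) * 4 ≤ (N:ℝ)^((3:ℝ)/4) * (N:ℝ)^((1:ℝ)/4) := by
          apply mul_le_mul_of_nonneg_left hc14 h34nonneg
      _ = (N:ℝ) := h34mul
  have hc2 : (p:ℤ) + 4 ≤ nhat N := by
    apply Int.le_floor.2
    push_cast
    exact hc34
  have hc3 : nhat N ≤ (N:ℤ) - 2 := by
    have hr : ((nhat N : ℤ):ℝ) ≤ (((N:ℤ) - 2 : ℤ):ℝ) := by
      push_cast
      linarith only [hnhle34, h34leN4, h4N]
    exact_mod_cast hr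
  have hc4 : ((nhat N : ℤ):ℝ) ≤ δ*(N:ℝ)/2 + 1 := by
    have h1 : (N:ℝ)^((3:ℝ)/4) * (4/δ) ≤ (N:ℝ) := by
      calc (N:ℝ)^((3:ℝ)/4) * (4/δ) ≤ (N:ℝ)^((3:ℝ)/4) * (N:ℝ)^((1:ℝ)/4) := by
            apply mul_le_mul_of_nonneg_left hc14δ h34nonneg
        _ = (N:ℝ) := h34mul
    have h2 : (N:ℝ)^((3:ℝ)/4) ≤ δ*(N:ℝ)/4 := by
      have h3 := mul_le_mul_of_nonneg_right h1 (le_of_lt (by positivity : (0:ℝ) < δ/4))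
      calc (N:ℝ)^((3:ℝ)/4) = (N:ℝ)^((3:ℝ)/4) * (4/δ) * (δ/4) := by
            field_simp
        _ ≤ (N:ℝ) * (δ/4) := h3
        _ = δ*(N:ℝ)/4 := by ring
    linarith only [h2, hnhle34, mul_nonneg hδ.le hN0R.le]
  have hnh0 : (0:ℤ) ≤ nhat N := by omega
  -- centers and barrier data
  set cl : ℤ × ℤ := (nhat N - 2, nhat N - 1) with hcl
  set cu : ℤ × ℤ := ((N:ℤ) - 1, (N:ℤ)) with hcu
  have hcl1 : cl.1 = nhat N - 2 := rfl
  have hcl2 : cl.2 = nhat N - 1 := rfl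
  have hcu1 : cu.1 = (N:ℤ) - 1 := rfl
  have hcu2 : cu.2 = (N:ℤ) := rfl
  set Q : ℝ := (N:ℝ)^(1 - b/4 : ℝ) with hQ
  have hQ1 : (1:ℝ) ≤ Q := by
    have h := Real.rpow_le_rpow_of_exponent_le hc6 (show (0:ℝ) ≤ 1 - b/4 by linarith only [hb2])
    rwa [Real.rpow_zero] at h
  set Um : ℝ := 9 * (N:ℝ)^2 with hUm
  set Msq : ℝ := 2 * (Q + 2)^2 with hMsq
  have hUm8 : (8:ℝ) ≤ Um := by rw [hUm]; exact aux_um8 h4N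
  have hUmpos : (0:ℝ) < Um := by linarith only [hUm8]
  have hMsq8 : (8:ℝ) ≤ Msq := by rw [hMsq]; exact aux_msq8 hQ1
  have hMsqpos : (0:ℝ) < Msq := by linarith only [hMsq8]
  have hsq_id : Q^2 * (N:ℝ)^(b/2) = (N:ℝ)^2 := by
    rw [hQ]
    have e1 : ((N:ℝ)^(1 - b/4 : ℝ))^(2:ℕ) = (N:ℝ)^(((1 - b/4)*2 : ℝ)) := by
      rw [← Real.rpow_natCast ((N:ℝ)^(1 - b/4 : ℝ)) 2, ← Real.rpow_mul hN0R.le]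
      norm_num
    rw [e1, ← Real.rpow_add hN0R]
    rw [show ((1 - b/4)*2 + b/2 : ℝ) = 2 by ring]
    rw [show ((2:ℝ) = ((2:ℕ):ℝ)) by norm_num, Real.rpow_natCast]
  have hMU2 : 2 * Msq ≤ Um := by
    rw [hMsq, hUm]; exact aux_mu2 hQ1 hc7 hsq_id
  have hMU : Msq ≤ Um := by linarith only [hMU2, hMsq8]
  have hden : Real.log (Um/Msq)/4 ≤ phiv Msq - phiv Um := phiv_gap (by linarith only [hMsq8]) hMU
  have hlogUM : (b/2) * Real.log (N:ℝ) - Real.log 2 ≤ Real.log (Um/Msq) := by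
    have h1 : (N:ℝ)^(b/2)/2 ≤ Um/Msq := by
      rw [div_le_div_iff₀ two_pos hMsqpos, hMsq, hUm]
      exact aux_mu3 hQ1 hc7 hsq_id
    have h2 : Real.log ((N:ℝ)^(b/2)/2) ≤ Real.log (Um/Msq) :=
      Real.log_le_log (by positivity) h1
    rw [Real.log_div (by positivity) (by norm_num), Real.log_rpow hN0R] at h2
    linarith only [h2]
  -- positivity of the normalisation
  have hxBi := (memB_iff p N x).1 hxB
  have hδ1 : δ < 1 := by
    have hb1 : |(x.1:ℝ)| < (N:ℝ) := by
      rw [abs_of_pos (show (0:ℝ) < (x.1:ℝ) by exact_mod_cast (by omega : (0:ℤ) < x.1))]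
      exact_mod_cast (by omega : x.1 < (N:ℤ))
    have hb2' : |(x.2:ℝ)| < (N:ℝ) := by
      rw [abs_of_pos (show (0:ℝ) < (x.2:ℝ) by exact_mod_cast (by omega : (0:ℤ) < x.2))]
      exact_mod_cast (by omega : x.2 < (N:ℤ))
    have hlt : δ * (N:ℝ) < (N:ℝ) := lt_of_lt_of_le hx1 (by
      rw [max_le_iff]; exact ⟨hb1.le, hb2'.le⟩)
    exact aux_delta_lt_one hN0R hlt
  have hlog36 : 0 < Real.log (36/δ^2) := Real.log_pos (aux_log36 hδ hδ1)
  have h48nonneg : (0:ℝ) ≤ (4/ε') * Real.log (36/δ^2) := by positivity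
  have hLpos : 0 < (b/2) * Real.log (N:ℝ) - Real.log 2 := by linarith only [hc8, h48nonneg]
  have hdenpos : 0 < phiv Msq - phiv Um := by linarith only [hden, hlogUM, hLpos]
  set aa : ℝ := 1 / (phiv Msq - phiv Um) with haa
  have haa0 : 0 < aa := by rw [haa]; positivity
  set Lm : ℝ := phiv Um with hLm
  set g : ℤ × ℤ → ℝ := fun w => aa * (bar cl w - Lm) + aa * (bar cu w - Lm) with hg
  -- the finite set
  set T : Finset (ℤ × ℤ) :=
    (Finset.Icc ((0:ℤ),(0:ℤ)) ((N:ℤ),(N:ℤ))).filter (fun z => Om p N z) with hT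
  have memT_of_Om : ∀ z : ℤ × ℤ, Om p N z → z ∈ T := by
    intro z hz
    obtain ⟨k1, k2, k3, k4⟩ := Om_box hc3 hc2 hz
    rw [hT, Finset.mem_filter, Finset.mem_Icc]
    exact ⟨⟨⟨k1, by omega⟩, ⟨by omega, k4⟩⟩, hz⟩
  have hne_cl : ∀ z : ℤ × ℤ, Om p N z → z ≠ cl := by
    intro z hz h
    obtain ⟨k1, k2, k3, k4⟩ := Om_box hc3 hc2 hz
    rw [h, hcl2] at k3
    omega
  have hne_cu : ∀ z : ℤ × ℤ, Om p N z → z ≠ cu := by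
    intro z hz h
    rw [Om_iff] at hz
    have e1 : z.1 = (N:ℤ) - 1 := by rw [h]
    have e2 : z.2 = (N:ℤ) := by rw [h]
    omega
  have hQbd : ∀ z : ℤ × ℤ, Om p N z →
      (1 ≤ qc cl z ∧ qc cl z ≤ Um ∧ 1 ≤ qc cu z ∧ qc cu z ≤ Um) := by
    intro z hz
    obtain ⟨k1, k2, k3, k4⟩ := Om_box hc3 hc2 hz
    have hle1 : qc cl z ≤ 2*(N:ℝ)^2 :=
      qc_le k1 (by omega) (by omega) k4 (by rw [hcl1]; omega) (by rw [hcl1]; omega)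
        (by rw [hcl2]; omega) (by rw [hcl2]; omega)
    have hle2 : qc cu z ≤ 2*(N:ℝ)^2 :=
      qc_le k1 (by omega) (by omega) k4 (by rw [hcu1]; omega) (by rw [hcu1]; omega)
        (by rw [hcu2]; omega) (by rw [hcu2])
    have h2N2 : 2*(N:ℝ)^2 ≤ Um := by rw [hUm]; exact aux_two2
    exact ⟨one_le_qc (hne_cl z hz), by linarith only [hle1, h2N2],
      one_le_qc (hne_cu z hz), by linarith only [hle2, h2N2]⟩
  have hgOm : ∀ z : ℤ × ℤ, Om p N z → 0 ≤ g z := by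
    intro z hz
    obtain ⟨k1, k2, k3, k4⟩ := hQbd z hz
    have b1 : phiv Um ≤ phiv (qc cl z) := phiv_anti k1 k2 hUm8
    have b2 : phiv Um ≤ phiv (qc cu z) := phiv_anti k3 k4 hUm8
    have t1 : (0:ℝ) ≤ aa * (bar cl z - Lm) := by
      apply mul_nonneg haa0.le
      rw [hLm]; unfold bar; linarith only [b1]
    have t2 : (0:ℝ) ≤ aa * (bar cu z - Lm) := by
      apply mul_nonneg haa0.le
      rw [hLm]; unfold bar; linarith only [b2]
    show (0:ℝ) ≤ aa * (bar cl z - Lm) + aa * (bar cu z - Lm)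
    linarith only [t1, t2]
  have hεβ : (N:ℝ)^(1 - ε/4) ≤ Q := by
    rw [hQ]
    exact Real.rpow_le_rpow_of_exponent_le hc6 (by linarith only [hbε])
  have haaD : aa * (phiv Msq - phiv Um) = 1 := by
    rw [haa]; field_simp; rw [hLm]
  have hgDtil : ∀ z : ℤ × ℤ, memDtil N ε z → Om p N z → 1 ≤ g z := by
    intro z hzt hzOm
    obtain ⟨⟨hz2, hk1, hk2⟩, hor⟩ := hzt
    obtain ⟨k1, k2, k3, k4⟩ := hQbd z hzOm
    show (1:ℝ) ≤ aa * (bar cl z - Lm) + aa * (bar cu z - Lm)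
    rcases hor with hlow | hhigh
    · have hql : qc cl z = 2*((z.1 - nhat N + 2 : ℤ):ℝ)^2 := by
        unfold qc
        rw [hcl1, hcl2, hz2]
        push_cast
        ring
      have hd2 : (2:ℝ) ≤ ((z.1 - nhat N + 2 : ℤ):ℝ) := by
        exact_mod_cast (by omega : (2:ℤ) ≤ z.1 - nhat N + 2)
      have hdub : ((z.1 - nhat N + 2 : ℤ):ℝ) ≤ Q + 2 := by
        push_cast
        have hnh0R : (0:ℝ) ≤ ((nhat N : ℤ):ℝ) := by exact_mod_cast hnh0
        linarith only [hlow, hεβ, hnh0R]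
      have hqlub : qc cl z ≤ Msq := by
        rw [hql, hMsq]
        have := aux_sq_mono (by linarith only [hd2]) hdub
        linarith only [this]
      have b1 : phiv Msq ≤ phiv (qc cl z) := phiv_anti k1 hqlub hMsq8
      have b2 : phiv Um ≤ phiv (qc cu z) := phiv_anti k3 k4 hUm8
      have t1 : 1 ≤ aa * (bar cl z - Lm) := by
        rw [hLm]
        unfold bar
        calc (1:ℝ) = aa * (phiv Msq - phiv Um) := haaD.symm
          _ ≤ aa * (phiv (qc cl z) - phiv Um) := by
              apply mul_le_mul_of_nonneg_left (by linarith only [b1]) haa0.le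
      have t2 : 0 ≤ aa * (bar cu z - Lm) := by
        apply mul_nonneg haa0.le
        rw [hLm]; unfold bar; linarith only [b2]
      linarith only [t1, t2]
    · have hqu : qc cu z = 2*((z.1 - ((N:ℤ) - 1) : ℤ):ℝ)^2 := by
        unfold qc
        rw [hcu1, hcu2, hz2]
        push_cast
        ring
      have hdlb : ((z.1 - ((N:ℤ) - 1) : ℤ):ℝ) ≤ -1 := by
        exact_mod_cast (by omega : (z.1 - ((N:ℤ) - 1) : ℤ) ≤ -1)
      have hdub : -(Q + 2) ≤ ((z.1 - ((N:ℤ) - 1) : ℤ):ℝ) := by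
        push_cast
        linarith only [hhigh, hεβ]
      have hquub : qc cu z ≤ Msq := by
        rw [hqu, hMsq]
        have := sq_le_sq' hdub (by linarith only [hdlb, hQ1] :
          ((z.1 - ((N:ℤ) - 1) : ℤ):ℝ) ≤ Q + 2)
        linarith only [this]
      have b1 : phiv Msq ≤ phiv (qc cu z) := phiv_anti k3 hquub hMsq8
      have b2 : phiv Um ≤ phiv (qc cl z) := phiv_anti k1 k2 hUm8
      have t1 : 1 ≤ aa * (bar cu z - Lm) := by
        rw [hLm]
        unfold bar
        calc (1:ℝ) = aa * (phiv Msq - phiv Um) := haaD.symm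
          _ ≤ aa * (phiv (qc cu z) - phiv Um) := by
              apply mul_le_mul_of_nonneg_left (by linarith only [b1]) haa0.le
      have t2 : 0 ≤ aa * (bar cl z - Lm) := by
        apply mul_nonneg haa0.le
        rw [hLm]; unfold bar; linarith only [b2]
      linarith only [t1, t2]
  -- maximum principle
  have hOmx : Om p N x := Or.inl hxB
  have hxT : x ∈ T := memT_of_Om x hOmx
  obtain ⟨z₀, hz₀T, hz₀max⟩ := T.exists_max_image (fun z => H N z - g z) ⟨x, hxT⟩
  have hz₀Om : Om p N z₀ := (Finset.mem_filter.1 hz₀T).2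
  have hmaxle : H N z₀ - g z₀ ≤ 0 := by
    by_cases hdt : memDtil N ε z₀
    · have e1 := hH1 z₀ hdt
      have e2 := hgDtil z₀ hdt hz₀Om
      linarith only [e1, e2]
    by_cases hbd : memBd p N z₀
    · have e1 := hHbd z₀ hbd
      have e2 := hgOm z₀ hz₀Om
      linarith only [e1, e2]
    rcases hz₀Om with hB | hD | hBd
    · exfalso
      obtain ⟨hn1, hn2, hn3, hn4n⟩ := nbrB hc3 hB
      have m1 : H N (z₀.1+1, z₀.2) - g (z₀.1+1, z₀.2) ≤ H N z₀ - g z₀ :=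
        hz₀max _ (memT_of_Om _ hn1)
      have m2 : H N (z₀.1-1, z₀.2) - g (z₀.1-1, z₀.2) ≤ H N z₀ - g z₀ :=
        hz₀max _ (memT_of_Om _ hn2)
      have m3 : H N (z₀.1, z₀.2+1) - g (z₀.1, z₀.2+1) ≤ H N z₀ - g z₀ :=
        hz₀max _ (memT_of_Om _ hn3)
      have m4 : H N (z₀.1, z₀.2-1) - g (z₀.1, z₀.2-1) ≤ H N z₀ - g z₀ :=
        hz₀max _ (memT_of_Om _ hn4n)
      have hlapH := hHlap z₀ hB
      rw [memB_iff] at hB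
      have h2cl : (2:ℝ) ≤ qc cl z₀ := by
        have h4 : (2:ℝ)^2 ≤ qc cl z₀ := by
          apply qc_lb2 (by norm_num)
          left
          rw [hcl2]
          exact_mod_cast (by omega : (2:ℤ) ≤ z₀.2 - (nhat N - 1))
        nlinarith only [h4]
      have h2cu : (2:ℝ) ≤ qc cu z₀ := by
        have h4 : (2:ℝ)^2 ≤ qc cu z₀ := by
          apply qc_lb1 (by norm_num)
          right
          rw [hcu1]
          exact_mod_cast (by omega : (2:ℤ) ≤ ((N:ℤ) - 1) - z₀.1)
        nlinarith only [h4]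
      have hlg1 : lap2 (bar cl) z₀ < 0 := superh h2cl
      have hlg2 : lap2 (bar cu) z₀ < 0 := superh h2cu
      have hlapg : lap2 g z₀ < 0 := by
        rw [hg, lap2_comb]
        have t1 := mul_neg_of_pos_of_neg haa0 hlg1
        have t2 := mul_neg_of_pos_of_neg haa0 hlg2
        linarith only [t1, t2]
      simp only [lap2] at hlapH hlapg
      linarith only [m1, m2, m3, m4, hlapH, hlapg]
    · exfalso
      obtain ⟨hn1, hn2⟩ := nbrD hc3 hc2 hD
      have m1 : H N (z₀.1-1, z₀.2) - g (z₀.1-1, z₀.2) ≤ H N z₀ - g z₀ :=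
        hz₀max _ (memT_of_Om _ hn1)
      have m2 : H N (z₀.1, z₀.2+1) - g (z₀.1, z₀.2+1) ≤ H N z₀ - g z₀ :=
        hz₀max _ (memT_of_Om _ hn2)
      have hrefH := hHref z₀ hD hdt
      obtain ⟨hd1, hd2, hd3⟩ := hD
      have h2cl : (2:ℝ) ≤ qc cl z₀ := by
        have h4 : (2:ℝ)^2 ≤ qc cl z₀ := by
          apply qc_lb2 (by norm_num)
          left
          rw [hcl2]
          exact_mod_cast (by omega : (2:ℤ) ≤ z₀.2 - (nhat N - 1))
        nlinarith only [h4]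
      have h2cu : (2:ℝ) ≤ qc cu z₀ :=
        qc_lb_both (by rw [hcu1]; omega) (by rw [hcu2]; omega)
      have hrg1 : ref2 (bar cl) z₀ < 0 := refl_superh (by rw [hcl1, hcl2]; ring) hd1 h2cl
      have hrg2 : ref2 (bar cu) z₀ < 0 := refl_superh (by rw [hcu1, hcu2]; ring) hd1 h2cu
      have hrefg : ref2 g z₀ < 0 := by
        rw [hg, ref2_comb]
        have t1 := mul_neg_of_pos_of_neg haa0 hrg1
        have t2 := mul_neg_of_pos_of_neg haa0 hrg2
        linarith only [t1, t2]
      simp only [ref2] at hrefH hrefg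
      linarith only [m1, m2, hrefH, hrefg]
    · exact absurd hBd hbd
  have hHlex : H N x ≤ g x := by
    have h1 : H N x - g x ≤ H N z₀ - g z₀ := hz₀max x hxT
    linarith only [h1, hmaxle]
  -- final numeric estimate on g x
  set vδ : ℝ := (δ*(N:ℝ)/2)^2 with hvδ
  have hδN2 : (1:ℝ) ≤ δ*(N:ℝ)/2 := by linarith only [hc5]
  have hvδpos : (0:ℝ) < vδ := by
    rw [hvδ]
    have := aux_one_le_sq hδN2
    linarith only [this]
  have hq_cl_ge : vδ ≤ qc cl x := by
    rw [hvδ]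
    rcases lt_max_iff.1 hx1 with h | h
    · apply qc_lb1 (by linarith only [hδN2])
      left
      rw [hcl1]
      rw [abs_of_pos (show (0:ℝ) < (x.1:ℝ) by exact_mod_cast
        (by omega : (0:ℤ) < x.1))] at h
      push_cast
      linarith only [h, hc4]
    · apply qc_lb2 (by linarith only [hδN2])
      left
      rw [hcl2]
      rw [abs_of_pos (show (0:ℝ) < (x.2:ℝ) by exact_mod_cast
        (by omega : (0:ℤ) < x.2))] at h
      push_cast
      linarith only [h, hc4]
  have hq_cu_ge : vδ ≤ qc cu x := by
    rw [hvδ]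
    rcases lt_max_iff.1 hx2 with h | h
    · apply qc_lb1 (by linarith only [hδN2])
      right
      rw [hcu1]
      rw [abs_of_pos (show (0:ℝ) < (N:ℝ) - (x.1:ℝ) by
        have hlt : (x.1:ℝ) < (N:ℝ) := by exact_mod_cast (by omega : x.1 < (N:ℤ))
        linarith only [hlt])] at h
      push_cast
      linarith only [h, hc5]
    · apply qc_lb2 (by linarith only [hδN2])
      right
      rw [hcu2]
      rw [abs_of_pos (show (0:ℝ) < (N:ℝ) - (x.2:ℝ) by
        have hlt : (x.2:ℝ) < (N:ℝ) := by exact_mod_cast (by omega : x.2 < (N:ℤ))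
        linarith only [hlt])] at h
      push_cast
      linarith only [h, hc5]
  obtain ⟨k1, k2, k3, k4⟩ := hQbd x hOmx
  have hident : Um/vδ = 36/δ^2 := by
    rw [hUm, hvδ]
    field_simp
    ring
  have hbnd : ∀ v : ℝ, 1 ≤ v → v ≤ Um → vδ ≤ v → phiv v - Lm ≤ Real.log (36/δ^2)/2 := by
    intro v hv1 hvUm hvδv
    have h1 : phiv v - phiv Um ≤ Real.log (Um/v)/2 := phiv_diff_le (by linarith only [hv1]) hvUm
    have h2 : Um/v ≤ Um/vδ := div_le_div_of_nonneg_left hUmpos.le hvδpos hvδv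
    have h3 : Real.log (Um/v) ≤ Real.log (Um/vδ) :=
      Real.log_le_log (by positivity) h2
    rw [hident] at h3
    rw [hLm]
    linarith only [h1, h3]
  have hgx : g x ≤ aa * Real.log (36/δ^2) := by
    have b1 : bar cl x - Lm ≤ Real.log (36/δ^2)/2 := hbnd _ k1 k2 hq_cl_ge
    have b2 : bar cu x - Lm ≤ Real.log (36/δ^2)/2 := hbnd _ k3 k4 hq_cu_ge
    have t1 := mul_le_mul_of_nonneg_left b1 haa0.le
    have t2 := mul_le_mul_of_nonneg_left b2 haa0.le
    show aa * (bar cl x - Lm) + aa * (bar cu x - Lm) ≤ aa * Real.log (36/δ^2)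
    linarith only [t1, t2]
  have haale : aa * Real.log (36/δ^2) ≤ ε' := by
    have haa4 : aa ≤ 4/((b/2) * Real.log (N:ℝ) - Real.log 2) := by
      rw [haa, div_le_div_iff₀ hdenpos hLpos]
      linarith only [hden, hlogUM]
    have step : aa * Real.log (36/δ^2)
        ≤ (4/((b/2) * Real.log (N:ℝ) - Real.log 2)) * Real.log (36/δ^2) :=
      mul_le_mul_of_nonneg_right haa4 hlog36.le
    have hfin : (4/((b/2) * Real.log (N:ℝ) - Real.log 2)) * Real.log (36/δ^2) ≤ ε' := by
      rw [div_mul_eq_mul_div, div_le_iff₀ hLpos]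
      have hkey : (4/ε') * Real.log (36/δ^2) * ε' = 4 * Real.log (36/δ^2) := by
        field_simp
      have hmul := mul_le_mul_of_nonneg_right
        (show (4/ε') * Real.log (36/δ^2) ≤ (b/2) * Real.log (N:ℝ) - Real.log 2 by
          linarith only [hc8]) hε'.le
      rw [hkey] at hmul
      nlinarith only [hmul, hε', hLpos]
    linarith only [step, hfin]
  exact le_trans hHlex (le_trans hgx haale)

end BoundaryDriven
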